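/- Let (M,d) be a compact metric space, E : M → ℝ continuous, h > 0, and χ⁰ ∈ M. Let χ : ℕ → M satisfy χ(0) = χ⁰ and, for every n ≥ 1, χ(n) minimizes u ↦ d²(u, χ(n−1))/(2h) + E(u) over M. Let u : (0,∞) → M be a variational interpolation, i.e. for every n ≥ 1 and every t ∈ ((n−1)h, nh], u(t) minimizes v ↦ d²(v, χ(n−1))/(2(t−(n−1)h)) + E(v) over M, with u(nh) = χ(n). Then for every N ∈ ℕ: E(χ(N)) + (1/2)·Σ_{n=1}^{N} d²(χ(n), χ(n−1))/h + (1/2)·∫_0^{Nh} |∂E|(u(s))² ds ≤ E(χ⁰), where the integral is the Lebesgue integral with values in [0,∞]. -/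

import Mathlib

open MeasureTheory Filter Topology
open scoped ENNReal

/-- The metric slope `|∂E|(u)`: the limsup, as `v → u` with `v ≠ u`, of
`max (E u - E v) 0 / dist v u`, valued in `[0,∞]`. -/
noncomputable def metricSlope {M : Type*} [PseudoMetricSpace M] (E : M → ℝ) (u : M) : ℝ≥0∞ :=
  Filter.limsup (fun v => ENNReal.ofReal (max (E u - E v) 0 / dist v u)) (𝓝[≠] u)

lemma slope_le_of_min {M : Type*} [MetricSpace M] (E : M → ℝ) (x w : M) (τ : ℝ) (hτ : 0 < τ)
    (hw : ∀ v, dist w x ^ 2 / (2 * τ) + E w ≤ dist v x ^ 2 / (2 * τ) + E v) :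
    metricSlope E w ≤ ENNReal.ofReal (dist w x / τ) := by
  apply ENNReal.le_of_forall_pos_le_add
  intro ε hε _
  have hεR : (0:ℝ) < ε := hε
  have hlim : Tendsto (fun v : M => (dist v x + dist w x) / (2 * τ)) (𝓝 w)
      (𝓝 ((dist w x + dist w x) / (2 * τ))) :=
    (((continuous_id.dist continuous_const).add continuous_const).div_const _).tendsto w
  have heq : (dist w x + dist w x) / (2 * τ) = dist w x / τ := by field_simp; ring
  rw [heq] at hlim
  have h1 : ∀ᶠ v in 𝓝 w, (dist v x + dist w x) / (2 * τ) < dist w x / τ + ε :=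
    hlim.eventually_lt_const (by linarith)
  have hev : ∀ᶠ v in 𝓝[≠] w,
      ENNReal.ofReal (max (E w - E v) 0 / dist v w) ≤ ENNReal.ofReal (dist w x / τ + ε) := by
    filter_upwards [h1.filter_mono nhdsWithin_le_nhds, self_mem_nhdsWithin] with v h1v hv
    apply ENNReal.ofReal_le_ofReal
    have hvw : 0 < dist v w := dist_pos.2 hv
    rw [div_le_iff₀ hvw]
    have htri : dist v x ≤ dist v w + dist w x := dist_triangle v w x
    have h2 : E w - E v ≤ (dist v x ^ 2 - dist w x ^ 2) / (2 * τ) := by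
      have := hw v; rw [sub_div]; linarith
    have h3 : dist v x ^ 2 - dist w x ^ 2 ≤ (dist v x + dist w x) * dist v w := by
      nlinarith [dist_nonneg (x := v) (y := x), dist_nonneg (x := w) (y := x)]
    have h4 : (dist v x ^ 2 - dist w x ^ 2) / (2 * τ) ≤
        (dist v x + dist w x) / (2 * τ) * dist v w := by
      rw [div_mul_eq_mul_div, div_le_div_iff₀ (by linarith) (by linarith)]
      nlinarith
    apply max_le
    · calc E w - E v ≤ (dist v x + dist w x) / (2 * τ) * dist v w := le_trans h2 h4
        _ ≤ (dist w x / τ + ε) * dist v w := by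
          apply mul_le_mul_of_nonneg_right (le_of_lt h1v) hvw.le
    · positivity
  calc metricSlope E w ≤ ENNReal.ofReal (dist w x / τ + ε) :=
        Filter.limsup_le_of_le (h := hev)
    _ ≤ ENNReal.ofReal (dist w x / τ) + ENNReal.ofReal (ε : ℝ) := ENNReal.ofReal_add_le
    _ = ENNReal.ofReal (dist w x / τ) + ε := by rw [ENNReal.ofReal_coe_nnreal]

lemma lintegral_Ioc_shift (f : ℝ → ℝ≥0∞) (c a b : ℝ) :
    ∫⁻ s in Set.Ioc (c + a) (c + b), f s = ∫⁻ τ in Set.Ioc a b, f (c + τ) := by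
  have hmp : MeasurePreserving (fun τ : ℝ => c + τ) volume volume :=
    measurePreserving_add_left volume c
  have hemb : MeasurableEmbedding (fun τ : ℝ => c + τ) :=
    (Homeomorph.addLeft c).measurableEmbedding
  rw [hmp.setLIntegral_comp_emb hemb f (Set.Ioc a b), Set.image_const_add_Ioc]

set_option maxHeartbeats 1000000 in
lemma step_estimate {M : Type*} [MetricSpace M] (E : M → ℝ) (x : M) (h : ℝ) (hh : 0 < h)
    (w : ℝ → M)
    (hw : ∀ τ : ℝ, 0 < τ → τ ≤ h → ∀ v,
      dist (w τ) x ^ 2 / (2 * τ) + E (w τ) ≤ dist v x ^ 2 / (2 * τ) + E v) :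
    ∫⁻ τ in Set.Ioc (0:ℝ) h, metricSlope E (w τ) ^ 2 ≤
      ENNReal.ofReal (2 * (E x - (dist (w h) x ^ 2 / (2 * h) + E (w h)))) := by
  set φ : ℝ → ℝ := fun τ => dist (w τ) x ^ 2 / (2 * τ) + E (w τ) with hφ
  have hφh : φ h = dist (w h) x ^ 2 / (2 * h) + E (w h) := rfl
  set c : ℝ := E x - φ h with hcdef
  have hφle : ∀ τ : ℝ, 0 < τ → τ ≤ h → φ τ ≤ E x := by
    intro τ h0 hτh
    have := hw τ h0 hτh x
    simpa [hφ, dist_self] using this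
  have hc0 : 0 ≤ c := sub_nonneg.2 (hφle h hh le_rfl)
  have hmono : ∀ s t : ℝ, 0 < s → s ≤ t → t ≤ h → dist (w s) x ≤ dist (w t) x := by
    intro s t hs hst hth
    rcases eq_or_lt_of_le hst with rfl | hlt
    · exact le_rfl
    have h1 := hw s hs (by linarith) (w t)
    have h2 := hw t (by linarith) hth (w s)
    set A := dist (w s) x ^ 2 - dist (w t) x ^ 2 with hA
    have key : A / (2 * s) ≤ A / (2 * t) := by
      rw [hA, sub_div, sub_div]
      have e1 : (dist (w t) x ^ 2 - dist (w s) x ^ 2) / (2 * s)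
          = dist (w t) x ^ 2 / (2 * s) - dist (w s) x ^ 2 / (2 * s) := by rw [sub_div]
      have e2 : (dist (w s) x ^ 2 - dist (w t) x ^ 2) / (2 * t)
          = dist (w s) x ^ 2 / (2 * t) - dist (w t) x ^ 2 / (2 * t) := by rw [sub_div]
      linarith [h1, h2]
    have hAle : A ≤ 0 := by
      by_contra hpos
      push_neg at hpos
      have := div_lt_div_of_pos_left hpos (by linarith : (0:ℝ) < 2*s) (by linarith : 2*s < 2*t)
      linarith
    have : dist (w s) x ^ 2 ≤ dist (w t) x ^ 2 := by
      have : dist (w s) x ^ 2 - dist (w t) x ^ 2 ≤ 0 := hAle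
      linarith
    exact le_of_pow_le_pow_left₀ (by norm_num) dist_nonneg this
  have hdecay : ∀ s t : ℝ, 0 < s → s < t → t ≤ h →
      φ t + dist (w s) x ^ 2 * (t - s) / (2 * s * t) ≤ φ s := by
    intro s t hs hlt hth
    have h2 := hw t (lt_trans hs hlt) hth (w s)
    have hs' : s ≠ 0 := ne_of_gt hs
    have ht' : t ≠ 0 := ne_of_gt (lt_trans hs hlt)
    have heq : dist (w s) x ^ 2 / (2 * t) + dist (w s) x ^ 2 * (t - s) / (2 * s * t)
        = dist (w s) x ^ 2 / (2 * s) := by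
      field_simp
      ring
    have hφs : φ s = dist (w s) x ^ 2 / (2 * s) + E (w s) := rfl
    have hφt : φ t = dist (w t) x ^ 2 / (2 * t) + E (w t) := rfl
    linarith [h2]
  have hsl : ∀ τ : ℝ, 0 < τ → τ ≤ h →
      metricSlope E (w τ) ^ 2 ≤ ENNReal.ofReal (dist (w τ) x ^ 2 / τ ^ 2) := by
    intro τ h0 hτ
    have h1 := slope_le_of_min E x (w τ) τ h0 (hw τ h0 hτ)
    calc metricSlope E (w τ) ^ 2 ≤ (ENNReal.ofReal (dist (w τ) x / τ)) ^ 2 :=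
          pow_le_pow_left' h1 2
      _ = ENNReal.ofReal ((dist (w τ) x / τ) ^ 2) := (ENNReal.ofReal_pow (by positivity) 2).symm
      _ = ENNReal.ofReal (dist (w τ) x ^ 2 / τ ^ 2) := by rw [div_pow]
  have key : ∀ r : ℝ, 1 < r →
      ∫⁻ τ in Set.Ioc (0:ℝ) h, metricSlope E (w τ) ^ 2 ≤
        ENNReal.ofReal (dist (w h) x ^ 2 * r * (r - 1) / h + 2 * r ^ 2 * c) := by
    intro r hr
    have hr0 : 0 < r := lt_trans one_pos hr
    set a : ℕ → ℝ := fun i => h / r ^ i with ha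
    have hap : ∀ i, 0 < a i := fun i => div_pos hh (pow_pos hr0 i)
    have halt : ∀ i, a (i+1) < a i := fun i =>
      div_lt_div_of_pos_left hh (pow_pos hr0 i) (pow_lt_pow_right₀ hr (Nat.lt_succ_self i))
    have hah : ∀ i, a i ≤ h := fun i => div_le_self hh.le (one_le_pow₀ hr.le)
    have harec : ∀ i, a i = r * a (i+1) := by
      intro i
      have : r ^ (i+1) = r ^ i * r := pow_succ r i
      rw [ha]
      field_simp [this]
      ring
    have ha0 : a 0 = h := by simp [ha]
    have hcover : Set.Ioc (0:ℝ) h ⊆ ⋃ i, Set.Ioc (a (i+1)) (a i) := by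
      rintro τ ⟨hτ0, hτh⟩
      have hex : ∃ i, a (i + 1) < τ := by
        obtain ⟨n, hn⟩ := pow_unbounded_of_one_lt (h / τ) hr
        refine ⟨n, ?_⟩
        have h1 : a n < τ := by
          rw [ha]
          rw [div_lt_iff₀ (pow_pos hr0 n)]
          rw [div_lt_iff₀ hτ0] at hn
          nlinarith [hn]
        exact lt_trans (halt n) h1
      have h1 : a (Nat.find hex + 1) < τ := Nat.find_spec hex
      have h2 : τ ≤ a (Nat.find hex) := by
        rcases Nat.eq_zero_or_pos (Nat.find hex) with hz | hpos
        · rw [hz, ha0]; exact hτh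
        · have hmin := Nat.find_min hex (Nat.sub_lt hpos one_pos)
          have heq : Nat.find hex - 1 + 1 = Nat.find hex := Nat.succ_pred_eq_of_pos hpos
          rw [heq] at hmin
          exact not_lt.mp hmin
      exact Set.mem_iUnion.2 ⟨Nat.find hex, h1, h2⟩
    have hpiece : ∀ i, (∫⁻ τ in Set.Ioc (a (i+1)) (a i), metricSlope E (w τ) ^ 2) ≤
        ENNReal.ofReal (dist (w (a i)) x ^ 2 / a (i+1) ^ 2 * (a i - a (i+1))) := by
      intro i
      have hb : ∀ τ ∈ Set.Ioc (a (i+1)) (a i), metricSlope E (w τ) ^ 2 ≤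
          ENNReal.ofReal (dist (w (a i)) x ^ 2 / a (i+1) ^ 2) := by
        rintro τ ⟨h1, h2⟩
        have hτ0 : 0 < τ := lt_trans (hap (i+1)) h1
        refine le_trans (hsl τ hτ0 (le_trans h2 (hah i))) (ENNReal.ofReal_le_ofReal ?_)
        apply div_le_div₀ (sq_nonneg _)
        · exact pow_le_pow_left₀ dist_nonneg (hmono τ (a i) hτ0 h2 (hah i)) 2
        · positivity
        · exact pow_le_pow_left₀ (hap (i+1)).le h1.le 2
      calc (∫⁻ τ in Set.Ioc (a (i+1)) (a i), metricSlope E (w τ) ^ 2)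
          ≤ ∫⁻ _ in Set.Ioc (a (i+1)) (a i),
              ENNReal.ofReal (dist (w (a i)) x ^ 2 / a (i+1) ^ 2) :=
            setLIntegral_mono measurable_const hb
        _ = ENNReal.ofReal (dist (w (a i)) x ^ 2 / a (i+1) ^ 2)
              * volume (Set.Ioc (a (i+1)) (a i)) := setLIntegral_const _ _
        _ = ENNReal.ofReal (dist (w (a i)) x ^ 2 / a (i+1) ^ 2 * (a i - a (i+1))) := by
            rw [Real.volume_Ioc, ← ENNReal.ofReal_mul (by positivity)]
    have hT : ∀ i, 0 ≤ φ (a (i+1)) - φ (a i) := by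
      intro i
      have hd := hdecay (a (i+1)) (a i) (hap (i+1)) (halt i) (hah i)
      have hnn : 0 ≤ dist (w (a (i+1))) x ^ 2 * (a i - a (i+1)) / (2 * a (i+1) * a i) := by
        apply div_nonneg (mul_nonneg (sq_nonneg _) (by linarith [halt i]))
        have h1 := hap i
        have h2 := hap (i+1)
        positivity
      exact sub_nonneg.2 (le_trans (le_add_of_nonneg_right hnn) hd)
    have hcomp : ∀ i, ENNReal.ofReal (dist (w (a (i+1))) x ^ 2 / a (i+2) ^ 2 * (a (i+1) - a (i+2)))
        ≤ ENNReal.ofReal (2 * r ^ 2) * ENNReal.ofReal (φ (a (i+1))- φ (a i)) := by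
      intro i
      rw [← ENNReal.ofReal_mul (by positivity)]
      apply ENNReal.ofReal_le_ofReal
      have hq0 : 0 < a (i+2) := hap (i+2)
      have e2 : a (i+1) = r * a (i+2) := harec (i+1)
      have e1 : a i = r * (r * a (i+2)) := by rw [harec i, e2]
      have hdec := hdecay (a (i+1)) (a i) (hap (i+1)) (halt i) (hah i)
      have heq1 : dist (w (a (i+1))) x ^ 2 * (a i - a (i+1)) / (2 * a (i+1) * a i)
          = dist (w (a (i+1))) x ^ 2 * (r - 1) / (2 * r ^ 2 * a (i+2)) := by
        rw [e1, e2]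
        have : a (i+2) ≠ 0 := ne_of_gt hq0
        have : r ≠ 0 := ne_of_gt hr0
        field_simp
      have heq2 : dist (w (a (i+1))) x ^ 2 / a (i+2) ^ 2 * (a (i+1) - a (i+2))
          = 2 * r ^ 2 * (dist (w (a (i+1))) x ^ 2 * (r - 1) / (2 * r ^ 2 * a (i+2))) := by
        rw [e2]
        have h1 : a (i+2) ≠ 0 := ne_of_gt hq0
        have h2 : r ≠ 0 := ne_of_gt hr0
        field_simp
      rw [heq2]
      have hstep : dist (w (a (i+1))) x ^ 2 * (r - 1) / (2 * r ^ 2 * a (i+2))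
          ≤ φ (a (i+1)) - φ (a i) := by rw [← heq1]; exact le_sub_iff_add_le'.2 hdec
      have h2r : (0:ℝ) ≤ 2 * r ^ 2 := by positivity
      exact mul_le_mul_of_nonneg_left hstep h2r
    have hsum1 : (∑' i, ENNReal.ofReal (φ (a (i+1)) - φ (a i))) ≤ ENNReal.ofReal c := by
      apply Summable.tsum_le_of_sum_le ENNReal.summable
      intro s
      obtain ⟨n, hn⟩ := s.exists_nat_subset_range
      calc (∑ i ∈ s, ENNReal.ofReal (φ (a (i+1)) - φ (a i)))
          ≤ ∑ i ∈ Finset.range n, ENNReal.ofReal (φ (a (i+1)) - φ (a i)) :=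
            Finset.sum_le_sum_of_subset hn
        _ = ENNReal.ofReal (∑ i ∈ Finset.range n, (φ (a (i+1)) - φ (a i))) :=
            (ENNReal.ofReal_sum_of_nonneg fun i _ => hT i).symm
        _ = ENNReal.ofReal (φ (a n) - φ (a 0)) := by
            rw [Finset.sum_range_sub (fun i => φ (a i))]
        _ ≤ ENNReal.ofReal c := by
            apply ENNReal.ofReal_le_ofReal
            rw [hcdef, ha0]
            have := hφle (a n) (hap n) (hah n)
            linarith
    set F : ℕ → ℝ≥0∞ := fun i => ∫⁻ τ in Set.Ioc (a (i+1)) (a i), metricSlope E (w τ) ^ 2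
      with hF
    calc (∫⁻ τ in Set.Ioc (0:ℝ) h, metricSlope E (w τ) ^ 2)
        ≤ ∑' i, F i :=
          le_trans (lintegral_mono_set hcover) (lintegral_iUnion_le _ _)
      _ = F 0 + ∑' i, F (i + 1) := tsum_eq_zero_add' ENNReal.summable
      _ ≤ ENNReal.ofReal (dist (w h) x ^ 2 * r * (r - 1) / h)
            + ENNReal.ofReal (2 * r ^ 2) * ENNReal.ofReal c := by
          apply add_le_add
          · refine le_trans (hpiece 0) (le_of_eq (congrArg _ ?_))
            have e1 : a 1 = h / r := by simp [ha, pow_one]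
            rw [ha0, e1]
            have h1 : h ≠ 0 := ne_of_gt hh
            have h2 : r ≠ 0 := ne_of_gt hr0
            field_simp
          · calc (∑' i, F (i + 1))
                ≤ ∑' i, ENNReal.ofReal (2 * r ^ 2) * ENNReal.ofReal (φ (a (i+1)) - φ (a i)) :=
                  ENNReal.tsum_le_tsum (fun i => le_trans (hpiece (i+1)) (hcomp i))
              _ = ENNReal.ofReal (2 * r ^ 2) * ∑' i, ENNReal.ofReal (φ (a (i+1)) - φ (a i)) :=
                  ENNReal.tsum_mul_left
              _ ≤ ENNReal.ofReal (2 * r ^ 2) * ENNReal.ofReal c :=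
                  mul_le_mul_right hsum1 _
      _ ≤ ENNReal.ofReal (dist (w h) x ^ 2 * r * (r - 1) / h + 2 * r ^ 2 * c) := by
          rw [← ENNReal.ofReal_mul (by positivity)]
          rw [ENNReal.ofReal_add
            (div_nonneg (mul_nonneg (mul_nonneg (sq_nonneg _) hr0.le) (by linarith)) hh.le) (by positivity)]
  have hgoal : 2 * (E x - (dist (w h) x ^ 2 / (2 * h) + E (w h))) = 2 * c := by
    rw [hcdef, hφh]
  rw [hgoal]
  apply ENNReal.le_of_forall_pos_le_add
  intro ε hε _
  have hεR : (0:ℝ) < ε := hε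
  set D := dist (w h) x with hD
  set K : ℝ := 2 * D ^ 2 / h + 6 * c with hK
  have hK0 : 0 ≤ K := by positivity
  set δ : ℝ := min 1 ((ε:ℝ) / (K + 1)) with hδ
  have hδ0 : 0 < δ := lt_min one_pos (by positivity)
  have hδ1 : δ ≤ 1 := min_le_left _ _
  have hδ2 : δ ≤ (ε:ℝ) / (K + 1) := min_le_right _ _
  have hr : 1 < 1 + δ := by linarith
  refine le_trans (key (1 + δ) hr) ?_
  have hP : 0 ≤ D ^ 2 / h := by positivity
  have hb1 : D ^ 2 * (1 + δ) * (1 + δ - 1) / h + 2 * (1 + δ) ^ 2 * c ≤ 2 * c + δ * K := by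
    have e : D ^ 2 * (1 + δ) * (1 + δ - 1) / h = (D ^ 2 / h) * ((1 + δ) * δ) := by ring
    rw [e, hK]
    have e2 : 2 * D ^ 2 / h = 2 * (D ^ 2 / h) := by ring
    rw [e2]
    nlinarith [mul_nonneg (mul_nonneg hP hδ0.le) (sub_nonneg.2 hδ1),
      mul_nonneg (mul_nonneg hc0 hδ0.le) (sub_nonneg.2 hδ1), mul_nonneg hc0 hδ0.le]
  have hb2 : δ * K ≤ (ε:ℝ) := by
    rw [le_div_iff₀ (by linarith : (0:ℝ) < K + 1)] at hδ2
    nlinarith [hδ0.le]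
  calc ENNReal.ofReal (D ^ 2 * (1 + δ) * (1 + δ - 1) / h + 2 * (1 + δ) ^ 2 * c)
      ≤ ENNReal.ofReal (2 * c + δ * K) := ENNReal.ofReal_le_ofReal hb1
    _ ≤ ENNReal.ofReal (2 * c) + ENNReal.ofReal (δ * K) := ENNReal.ofReal_add_le
    _ ≤ ENNReal.ofReal (2 * c) + ε := by
        apply add_le_add_right
        refine le_trans (ENNReal.ofReal_le_ofReal hb2) ?_
        rw [ENNReal.ofReal_coe_nnreal]

lemma lintegral_Ioc_le_sum (f : ℝ → ℝ≥0∞) (h : ℝ) (hh : 0 ≤ h) (N : ℕ) :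
    (∫⁻ s in Set.Ioc (0:ℝ) ((N:ℝ) * h), f s) ≤
      ∑ n ∈ Finset.Icc 1 N, ∫⁻ s in Set.Ioc (((n:ℝ) - 1) * h) ((n:ℝ) * h), f s := by
  induction N with
  | zero => simp
  | succ N ih =>
    rw [Finset.sum_Icc_succ_top (by omega : 1 ≤ N + 1)]
    have hsub : Set.Ioc (0:ℝ) (((N:ℕ)+1:ℕ) * h) ⊆
        Set.Ioc (0:ℝ) ((N:ℝ) * h) ∪ Set.Ioc ((N:ℝ) * h) ((((N:ℕ)+1:ℕ):ℝ) * h) := by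
      rintro s ⟨hs1, hs2⟩
      rcases le_or_gt s ((N:ℝ) * h) with hc | hc
      · exact Or.inl ⟨hs1, hc⟩
      · exact Or.inr ⟨hc, hs2⟩
    calc (∫⁻ s in Set.Ioc (0:ℝ) (((N:ℕ)+1:ℕ) * h), f s)
        ≤ ∫⁻ s in Set.Ioc (0:ℝ) ((N:ℝ) * h) ∪ Set.Ioc ((N:ℝ) * h) ((((N:ℕ)+1:ℕ):ℝ) * h), f s :=
          lintegral_mono_set hsub
      _ ≤ (∫⁻ s in Set.Ioc (0:ℝ) ((N:ℝ) * h), f s)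
            + ∫⁻ s in Set.Ioc ((N:ℝ) * h) ((((N:ℕ)+1:ℕ):ℝ) * h), f s :=
          lintegral_union_le _ _ _
      _ ≤ _ := by
          apply add_le_add ih
          apply le_of_eq
          congr 2 <;> push_cast <;> ring


theorem stmt_0 {M : Type*} [MetricSpace M] [CompactSpace M]
    (E : M → ℝ) (hE : Continuous E)
    (h : ℝ) (hh : 0 < h) (χ0 : M) (χ : ℕ → M) (hinit : χ 0 = χ0)
    (hmin : ∀ n : ℕ, 1 ≤ n → ∀ v : M,
      dist (χ n) (χ (n - 1)) ^ 2 / (2 * h) + E (χ n) ≤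
        dist v (χ (n - 1)) ^ 2 / (2 * h) + E v)
    (u : ℝ → M)
    (humin : ∀ n : ℕ, 1 ≤ n → ∀ t : ℝ, ((n : ℝ) - 1) * h < t → t ≤ (n : ℝ) * h →
      ∀ v : M,
        dist (u t) (χ (n - 1)) ^ 2 / (2 * (t - ((n : ℝ) - 1) * h)) + E (u t) ≤
          dist v (χ (n - 1)) ^ 2 / (2 * (t - ((n : ℝ) - 1) * h)) + E v)
    (huend : ∀ n : ℕ, 1 ≤ n → u ((n : ℝ) * h) = χ n)
    (N : ℕ) :
    ((E (χ N) : ℝ) : EReal)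
      + (((1 / 2) * ∑ n ∈ Finset.Icc 1 N, dist (χ n) (χ (n - 1)) ^ 2 / h : ℝ) : EReal)
      + ((1 / 2 : ℝ) : EReal) *
        ((∫⁻ s in Set.Ioc (0 : ℝ) ((N : ℝ) * h), metricSlope E (u s) ^ 2 : ℝ≥0∞) : EReal)
      ≤ ((E χ0 : ℝ) : EReal) := by
  -- the per-step bound
  have hstep : ∀ n : ℕ, 1 ≤ n →
      (∫⁻ s in Set.Ioc (((n:ℝ) - 1) * h) ((n:ℝ) * h), metricSlope E (u s) ^ 2) ≤
        ENNReal.ofReal (2 * (E (χ (n - 1)) - E (χ n) - dist (χ n) (χ (n - 1)) ^ 2 / (2 * h))) := by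
    intro n hn
    have hc1 : ((n:ℝ) - 1) * h + 0 = ((n:ℝ) - 1) * h := by ring
    have hc2 : ((n:ℝ) - 1) * h + h = (n:ℝ) * h := by ring
    have hshift := lintegral_Ioc_shift (fun s => metricSlope E (u s) ^ 2) (((n:ℝ) - 1) * h) 0 h
    rw [hc1, hc2] at hshift
    rw [hshift]
    have hw : ∀ τ : ℝ, 0 < τ → τ ≤ h → ∀ v,
        dist (u (((n:ℝ) - 1) * h + τ)) (χ (n - 1)) ^ 2 / (2 * τ) + E (u (((n:ℝ) - 1) * h + τ)) ≤
          dist v (χ (n - 1)) ^ 2 / (2 * τ) + E v := by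
      intro τ hτ0 hτh v
      have ht1 : ((n:ℝ) - 1) * h < ((n:ℝ) - 1) * h + τ := by linarith
      have ht2 : ((n:ℝ) - 1) * h + τ ≤ (n:ℝ) * h := by nlinarith
      have := humin n hn (((n:ℝ) - 1) * h + τ) ht1 ht2 v
      have he : ((n:ℝ) - 1) * h + τ - ((n:ℝ) - 1) * h = τ := by ring
      rw [he] at this
      exact this
    have hend : u (((n:ℝ) - 1) * h + h) = χ n := by rw [hc2]; exact huend n hn
    have := step_estimate E (χ (n - 1)) h hh (fun τ => u (((n:ℝ) - 1) * h + τ)) hw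
    simp only [hend] at this
    refine le_trans this (le_of_eq (congrArg _ (by ring)))
  -- nonnegativity of the per-step budget
  have hb0 : ∀ n : ℕ, 1 ≤ n →
      0 ≤ E (χ (n - 1)) - E (χ n) - dist (χ n) (χ (n - 1)) ^ 2 / (2 * h) := by
    intro n hn
    have := hmin n hn (χ (n - 1))
    simp only [dist_self] at this
    have h0 : (0:ℝ) ^ 2 / (2 * h) = 0 := by
      rw [zero_pow (by norm_num)]; exact zero_div _
    rw [h0] at this
    linarith
  -- total bound
  set I : ℝ≥0∞ := ∫⁻ s in Set.Ioc (0 : ℝ) ((N : ℝ) * h), metricSlope E (u s) ^ 2 with hI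
  set B : ℝ := ∑ n ∈ Finset.Icc 1 N, (E (χ (n - 1)) - E (χ n) - dist (χ n) (χ (n - 1)) ^ 2 / (2 * h))
    with hB
  have hBsum : B = E χ0 - E (χ N)
      - (∑ n ∈ Finset.Icc 1 N, dist (χ n) (χ (n - 1)) ^ 2 / h) / 2 := by
    rw [hB]
    rw [Finset.sum_sub_distrib]
    congr 1
    · have htel : ∀ m : ℕ, (∑ n ∈ Finset.Icc 1 m, (E (χ (n - 1)) - E (χ n)))
          = E (χ 0) - E (χ m) := by
        intro m
        induction m with
        | zero => simp
        | succ m ih =>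
          rw [Finset.sum_Icc_succ_top (by omega : 1 ≤ m + 1), ih]
          have hmm : m + 1 - 1 = m := rfl
          rw [hmm]
          ring
      rw [htel, hinit]
    · have hne : h ≠ 0 := ne_of_gt hh
      rw [eq_div_iff (two_ne_zero : (2:ℝ) ≠ 0), Finset.sum_mul]
      apply Finset.sum_congr rfl
      intro n _
      field_simp
  have htot : I ≤ ENNReal.ofReal (2 * B) := by
    calc I ≤ ∑ n ∈ Finset.Icc 1 N,
          ∫⁻ s in Set.Ioc (((n:ℝ) - 1) * h) ((n:ℝ) * h), metricSlope E (u s) ^ 2 :=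
        lintegral_Ioc_le_sum _ h hh.le N
      _ ≤ ∑ n ∈ Finset.Icc 1 N, ENNReal.ofReal
            (2 * (E (χ (n - 1)) - E (χ n) - dist (χ n) (χ (n - 1)) ^ 2 / (2 * h))) := by
          apply Finset.sum_le_sum
          intro n hn
          exact hstep n (Finset.mem_Icc.mp hn).1
      _ = ENNReal.ofReal (2 * B) := by
          rw [hB, Finset.mul_sum]
          exact (ENNReal.ofReal_sum_of_nonneg fun n hn => by
            have := hb0 n (Finset.mem_Icc.mp hn).1; linarith).symm
  have hIne : I ≠ ⊤ := ne_top_of_le_ne_top ENNReal.ofReal_ne_top htot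
  set A : ℝ := I.toReal with hA
  have hA0 : 0 ≤ A := ENNReal.toReal_nonneg
  have hAle : A ≤ 2 * B := by
    have h2B : 0 ≤ 2 * B := by
      have : 0 ≤ B := Finset.sum_nonneg fun n hn => hb0 n (Finset.mem_Icc.mp hn).1
      linarith
    exact ENNReal.toReal_le_of_le_ofReal h2B htot
  have hIA : I = ENNReal.ofReal A := by rw [hA, ENNReal.ofReal_toReal hIne]
  rw [hIA]
  have hcoe : ((ENNReal.ofReal A : ℝ≥0∞) : EReal) = ((A : ℝ) : EReal) := by
    rw [EReal.coe_ennreal_ofReal, max_eq_left hA0]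
  rw [hcoe, ← EReal.coe_mul, ← EReal.coe_add, ← EReal.coe_add, EReal.coe_le_coe_iff]
  set S : ℝ := ∑ n ∈ Finset.Icc 1 N, dist (χ n) (χ (n - 1)) ^ 2 / h with hS
  rw [hBsum] at hAle
  nlinarith [hAle]
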